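/- Let X, Y be finite sets and Q : Y × X × Y → [0,1] fixed channel constants with ∑_y Q(y|x,y') = 1. For a joint distribution P on X × Y, define the joint distribution R on Y × X × Y by R(y,x,y') = Q(y|x,y')·P(x,y'), and let I(P) = I(X; Y | Y') be the conditional mutual information of R. Then the map P ↦ I(P) is concave on the simplex of distributions on X × Y. -/

import Mathlib

open Finset Real

open Finset Real

lemma g_convex_aux (a b s₁ t₁ s₂ t₂ : ℝ) (ha : 0 ≤ a) (hb : 0 ≤ b) (hab : a + b = 1)
    (hs₁ : 0 ≤ s₁) (h₁ : s₁ ≤ t₁) (hs₂ : 0 ≤ s₂) (h₂ : s₂ ≤ t₂) :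
    (a * s₁ + b * s₂) * Real.log (a * s₁ + b * s₂)
      - (a * s₁ + b * s₂) * Real.log (a * t₁ + b * t₂)
    ≤ a * (s₁ * Real.log s₁ - s₁ * Real.log t₁)
      + b * (s₂ * Real.log s₂ - s₂ * Real.log t₂) := by
  rcases eq_or_lt_of_le ha with rfl | ha'
  · simp at hab; simp [hab]
  rcases eq_or_lt_of_le hb with rfl | hb'
  · simp at hab; simp [hab]
  -- now a, b > 0
  have ht₁ : 0 ≤ t₁ := hs₁.trans h₁
  have ht₂ : 0 ≤ t₂ := hs₂.trans h₂
  rcases eq_or_lt_of_le ht₁ with rfl | ht₁'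
  · -- t₁ = 0, so s₁ = 0
    have hs : s₁ = 0 := le_antisymm h₁ hs₁
    subst hs
    rcases eq_or_lt_of_le hs₂ with rfl | hs₂'
    · simp
    have ht₂' : 0 < t₂ := lt_of_lt_of_le hs₂' h₂
    rw [show a * 0 + b * s₂ = b * s₂ by ring, show a * 0 + b * t₂ = b * t₂ by ring,
      Real.log_mul hb'.ne' hs₂'.ne', Real.log_mul hb'.ne' ht₂'.ne']
    nlinarith [Real.log_le_log hs₂' h₂]
  rcases eq_or_lt_of_le ht₂ with rfl | ht₂'
  · have hs : s₂ = 0 := le_antisymm h₂ hs₂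
    subst hs
    rcases eq_or_lt_of_le hs₁ with rfl | hs₁'
    · simp
    have ht₁'' : 0 < t₁ := lt_of_lt_of_le hs₁' h₁
    rw [show a * s₁ + b * 0 = a * s₁ by ring, show a * t₁ + b * 0 = a * t₁ by ring,
      Real.log_mul ha'.ne' hs₁'.ne', Real.log_mul ha'.ne' ht₁''.ne']
    nlinarith [Real.log_le_log hs₁' h₁]
  -- main case: t₁, t₂ > 0
  have ht : 0 < a * t₁ + b * t₂ := by positivity
  rcases eq_or_lt_of_le hs₁ with rfl | hs₁'
  · -- s₁ = 0
    rcases eq_or_lt_of_le hs₂ with rfl | hs₂'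
    · simp
    have h1 : Real.log (b * s₂) = Real.log b + Real.log s₂ := Real.log_mul hb'.ne' hs₂'.ne'
    have h2 : Real.log (b * t₂) ≤ Real.log (a * t₁ + b * t₂) := by
      apply Real.log_le_log (by positivity); nlinarith
    rw [Real.log_mul hb'.ne' ht₂'.ne'] at h2
    simp only [mul_zero, zero_add, zero_mul, mul_zero, Real.log_zero, sub_zero, mul_zero,
      zero_sub]
    rw [h1]
    nlinarith [mul_le_mul_of_nonneg_left h2 (by positivity : (0:ℝ) ≤ b * s₂)]
  rcases eq_or_lt_of_le hs₂ with rfl | hs₂'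
  · have h1 : Real.log (a * s₁) = Real.log a + Real.log s₁ := Real.log_mul ha'.ne' hs₁'.ne'
    have h2 : Real.log (a * t₁) ≤ Real.log (a * t₁ + b * t₂) := by
      apply Real.log_le_log (by positivity); nlinarith
    rw [Real.log_mul ha'.ne' ht₁'.ne'] at h2
    simp only [mul_zero, add_zero, zero_mul, mul_zero, Real.log_zero, sub_zero]
    rw [h1]
    nlinarith [mul_le_mul_of_nonneg_left h2 (by positivity : (0:ℝ) ≤ a * s₁)]
  -- fully positive case: use convexity of x ↦ x log x
  set t := a * t₁ + b * t₂ with htdef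
  have hw₁ : (0:ℝ) ≤ a * t₁ / t := by positivity
  have hw₂ : (0:ℝ) ≤ b * t₂ / t := by positivity
  have hw : a * t₁ / t + b * t₂ / t = 1 := by field_simp; exact htdef.symm
  have key := Real.convexOn_mul_log.2 (Set.mem_Ici.mpr (by positivity : (0:ℝ) ≤ s₁ / t₁))
    (Set.mem_Ici.mpr (by positivity : (0:ℝ) ≤ s₂ / t₂)) hw₁ hw₂ hw
  simp only [smul_eq_mul] at key
  have e1 : a * t₁ / t * (s₁ / t₁) = a * s₁ / t := by field_simp
  have e2 : b * t₂ / t * (s₂ / t₂) = b * s₂ / t := by field_simp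
  rw [e1, e2] at key
  have e3 : a * s₁ / t + b * s₂ / t = (a * s₁ + b * s₂) / t := by ring
  rw [e3] at key
  have key' : (a * s₁ + b * s₂) * Real.log ((a * s₁ + b * s₂) / t)
      ≤ a * s₁ * Real.log (s₁ / t₁) + b * s₂ * Real.log (s₂ / t₂) := by
    have := mul_le_mul_of_nonneg_left key ht.le
    calc (a * s₁ + b * s₂) * Real.log ((a * s₁ + b * s₂) / t)
        = t * ((a * s₁ + b * s₂) / t * Real.log ((a * s₁ + b * s₂) / t)) := by
          field_simp
      _ ≤ t * (a * t₁ / t * (s₁ / t₁ * Real.log (s₁ / t₁))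
            + b * t₂ / t * (s₂ / t₂ * Real.log (s₂ / t₂))) := this
      _ = a * s₁ * Real.log (s₁ / t₁) + b * s₂ * Real.log (s₂ / t₂) := by
          field_simp
  have hs : 0 < a * s₁ + b * s₂ := by positivity
  rw [Real.log_div hs.ne' ht.ne', Real.log_div hs₁'.ne' ht₁'.ne',
    Real.log_div hs₂'.ne' ht₂'.ne'] at key'
  nlinarith [key']


open Finset Real

lemma ident_aux {X Y : Type*} [Fintype X] [Fintype Y]
    (Q : Y → X → Y → ℝ) (hQ0 : ∀ y x y', 0 ≤ Q y x y')
    (hQ1 : ∀ x y', ∑ y, Q y x y' = 1)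
    (P : X → Y → ℝ) (hP : ∀ x y', 0 ≤ P x y') :
    ∑ y, ∑ x, ∑ y',
        (Q y x y' * P x y') *
          Real.log ((Q y x y' * P x y') * (∑ y₂, ∑ x₂, Q y₂ x₂ y' * P x₂ y') /
            ((∑ y₂, Q y₂ x y' * P x y') * (∑ x₂, Q y x₂ y' * P x₂ y')))
    = (∑ y, ∑ x, ∑ y', (Q y x y' * P x y') * Real.log (Q y x y'))
      - ∑ y, ∑ y',
          ((∑ x, Q y x y' * P x y') * Real.log (∑ x, Q y x y' * P x y')
            - (∑ x, Q y x y' * P x y') * Real.log (∑ y₂, ∑ x₂, Q y₂ x₂ y' * P x₂ y')) := by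
  have hpt : ∀ y x y',
      (Q y x y' * P x y') *
          Real.log ((Q y x y' * P x y') * (∑ y₂, ∑ x₂, Q y₂ x₂ y' * P x₂ y') /
            ((∑ y₂, Q y₂ x y' * P x y') * (∑ x₂, Q y x₂ y' * P x₂ y')))
      = (Q y x y' * P x y') * Real.log (Q y x y')
        - ((Q y x y' * P x y') * Real.log (∑ x₂, Q y x₂ y' * P x₂ y')
          - (Q y x y' * P x y') * Real.log (∑ y₂, ∑ x₂, Q y₂ x₂ y' * P x₂ y')) := by
    intro y x y'
    have hD : (∑ y₂, Q y₂ x y' * P x y') = P x y' := by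
      rw [← Finset.sum_mul, hQ1, one_mul]
    rw [hD]
    rcases eq_or_ne (Q y x y' * P x y') 0 with h0 | h0
    · simp [h0]
    · have hQpos : 0 < Q y x y' :=
        lt_of_le_of_ne (hQ0 y x y') (fun h => h0 (by rw [← h]; ring))
      have hPpos : 0 < P x y' :=
        lt_of_le_of_ne (hP x y') (fun h => h0 (by rw [← h]; ring))
      have hS : 0 < ∑ x₂, Q y x₂ y' * P x₂ y' := by
        have := Finset.single_le_sum (f := fun x₂ => Q y x₂ y' * P x₂ y')
          (fun i _ => mul_nonneg (hQ0 y i y') (hP i y')) (Finset.mem_univ x)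
        nlinarith [mul_pos hQpos hPpos]
      have hT : 0 < ∑ y₂, ∑ x₂, Q y₂ x₂ y' * P x₂ y' := by
        have := Finset.single_le_sum (f := fun y₂ => ∑ x₂, Q y₂ x₂ y' * P x₂ y')
          (fun i _ => Finset.sum_nonneg fun j _ => mul_nonneg (hQ0 i j y') (hP j y'))
          (Finset.mem_univ y)
        linarith
      rw [Real.log_div (by positivity) (by positivity), Real.log_mul (by positivity) hT.ne',
        Real.log_mul hQpos.ne' hPpos.ne', Real.log_mul hPpos.ne' hS.ne']
      ring
  calc ∑ y, ∑ x, ∑ y',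
        (Q y x y' * P x y') *
          Real.log ((Q y x y' * P x y') * (∑ y₂, ∑ x₂, Q y₂ x₂ y' * P x₂ y') /
            ((∑ y₂, Q y₂ x y' * P x y') * (∑ x₂, Q y x₂ y' * P x₂ y')))
      = ∑ y, ∑ x, ∑ y',
          ((Q y x y' * P x y') * Real.log (Q y x y')
            - ((Q y x y' * P x y') * Real.log (∑ x₂, Q y x₂ y' * P x₂ y')
              - (Q y x y' * P x y') * Real.log (∑ y₂, ∑ x₂, Q y₂ x₂ y' * P x₂ y'))) := by
        exact Finset.sum_congr rfl fun y _ => Finset.sum_congr rfl fun x _ =>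
          Finset.sum_congr rfl fun y' _ => hpt y x y'
    _ = (∑ y, ∑ x, ∑ y', (Q y x y' * P x y') * Real.log (Q y x y'))
        - ∑ y, ∑ x, ∑ y',
            ((Q y x y' * P x y') * Real.log (∑ x₂, Q y x₂ y' * P x₂ y')
              - (Q y x y' * P x y') * Real.log (∑ y₂, ∑ x₂, Q y₂ x₂ y' * P x₂ y')) := by
        simp [Finset.sum_sub_distrib]
    _ = (∑ y, ∑ x, ∑ y', (Q y x y' * P x y') * Real.log (Q y x y'))
        - ∑ y, ∑ y',
            ((∑ x, Q y x y' * P x y') * Real.log (∑ x, Q y x y' * P x y')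
              - (∑ x, Q y x y' * P x y') * Real.log (∑ y₂, ∑ x₂, Q y₂ x₂ y' * P x₂ y')) := by
        congr 1
        refine Finset.sum_congr rfl fun y _ => ?_
        rw [Finset.sum_comm]
        refine Finset.sum_congr rfl fun y' _ => ?_
        rw [Finset.sum_sub_distrib, ← Finset.sum_mul, ← Finset.sum_mul]


theorem stmt13 {X Y : Type*} [Fintype X] [Fintype Y] [Nonempty X] [Nonempty Y]
    (Q : Y → X → Y → ℝ)
    (hQ0 : ∀ y x y', 0 ≤ Q y x y') (hQle : ∀ y x y', Q y x y' ≤ 1)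
    (hQ1 : ∀ x y', ∑ y, Q y x y' = 1) :
    ConcaveOn ℝ {P : X → Y → ℝ | (∀ x y', 0 ≤ P x y') ∧ ∑ x, ∑ y', P x y' = 1}
      (fun P => ∑ y, ∑ x, ∑ y',
        (Q y x y' * P x y') *
          Real.log ((Q y x y' * P x y') * (∑ y₂, ∑ x₂, Q y₂ x₂ y' * P x₂ y') /
            ((∑ y₂, Q y₂ x y' * P x y') * (∑ x₂, Q y x₂ y' * P x₂ y')))) := by
  have hST : ∀ (P : X → Y → ℝ), (∀ x y', 0 ≤ P x y') → ∀ y y',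
      (0 ≤ ∑ x, Q y x y' * P x y') ∧
        (∑ x, Q y x y' * P x y') ≤ ∑ y₂, ∑ x₂, Q y₂ x₂ y' * P x₂ y' := by
    intro P hP y y'
    refine ⟨Finset.sum_nonneg fun x _ => mul_nonneg (hQ0 y x y') (hP x y'), ?_⟩
    have := Finset.single_le_sum (f := fun y₂ => ∑ x₂, Q y₂ x₂ y' * P x₂ y')
      (fun i _ => Finset.sum_nonneg fun j _ => mul_nonneg (hQ0 i j y') (hP j y'))
      (Finset.mem_univ y)
    simpa using this
  constructor
  · intro P₁ h₁ P₂ h₂ a b ha hb hab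
    constructor
    · intro x y'
      simp only [Pi.add_apply, Pi.smul_apply, smul_eq_mul]
      exact add_nonneg (mul_nonneg ha (h₁.1 x y')) (mul_nonneg hb (h₂.1 x y'))
    · simp only [Pi.add_apply, Pi.smul_apply, smul_eq_mul, Finset.sum_add_distrib,
        ← Finset.mul_sum]
      rw [h₁.2, h₂.2, mul_one, mul_one]
      exact hab
  · intro P₁ h₁ P₂ h₂ a b ha hb hab
    have hPc : ∀ x y', 0 ≤ (a • P₁ + b • P₂) x y' := by
      intro x y'
      simp only [Pi.add_apply, Pi.smul_apply, smul_eq_mul]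
      exact add_nonneg (mul_nonneg ha (h₁.1 x y')) (mul_nonneg hb (h₂.1 x y'))
    simp only [smul_eq_mul]
    rw [ident_aux Q hQ0 hQ1 P₁ h₁.1, ident_aux Q hQ0 hQ1 P₂ h₂.1,
      ident_aux Q hQ0 hQ1 _ hPc]
    have step : ∀ (y : Y) (x : X) (y' : Y),
        (Q y x y' * ((a • P₁ + b • P₂) x y')) * Real.log (Q y x y')
        = a * ((Q y x y' * P₁ x y') * Real.log (Q y x y'))
          + b * ((Q y x y' * P₂ x y') * Real.log (Q y x y')) := by
      intro y x y'
      simp only [Pi.add_apply, Pi.smul_apply, smul_eq_mul]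
      ring
    have hL : (∑ y, ∑ x, ∑ y', (Q y x y' * ((a • P₁ + b • P₂) x y')) * Real.log (Q y x y'))
        = a * (∑ y, ∑ x, ∑ y', (Q y x y' * P₁ x y') * Real.log (Q y x y'))
          + b * (∑ y, ∑ x, ∑ y', (Q y x y' * P₂ x y') * Real.log (Q y x y')) := by
      simp only [step, Finset.sum_add_distrib, ← Finset.mul_sum]
    have hSc : ∀ (y : Y) (y' : Y),
        (∑ x, Q y x y' * ((a • P₁ + b • P₂) x y'))
        = a * (∑ x, Q y x y' * P₁ x y') + b * (∑ x, Q y x y' * P₂ x y') := by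
      intro y y'
      simp only [Pi.add_apply, Pi.smul_apply, smul_eq_mul, Finset.mul_sum,
        ← Finset.sum_add_distrib]
      exact Finset.sum_congr rfl fun x _ => by ring
    have hTc : ∀ (y' : Y),
        (∑ y₂, ∑ x₂, Q y₂ x₂ y' * ((a • P₁ + b • P₂) x₂ y'))
        = a * (∑ y₂, ∑ x₂, Q y₂ x₂ y' * P₁ x₂ y')
          + b * (∑ y₂, ∑ x₂, Q y₂ x₂ y' * P₂ x₂ y') := by
      intro y'
      simp only [Pi.add_apply, Pi.smul_apply, smul_eq_mul, Finset.mul_sum,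
        ← Finset.sum_add_distrib]
      exact Finset.sum_congr rfl fun y₂ _ => Finset.sum_congr rfl fun x₂ _ => by ring
    have hD : (∑ y, ∑ y',
          ((∑ x, Q y x y' * ((a • P₁ + b • P₂) x y'))
              * Real.log (∑ x, Q y x y' * ((a • P₁ + b • P₂) x y'))
            - (∑ x, Q y x y' * ((a • P₁ + b • P₂) x y'))
              * Real.log (∑ y₂, ∑ x₂, Q y₂ x₂ y' * ((a • P₁ + b • P₂) x₂ y'))))
        ≤ a * (∑ y, ∑ y',
            ((∑ x, Q y x y' * P₁ x y') * Real.log (∑ x, Q y x y' * P₁ x y')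
              - (∑ x, Q y x y' * P₁ x y')
                * Real.log (∑ y₂, ∑ x₂, Q y₂ x₂ y' * P₁ x₂ y')))
          + b * (∑ y, ∑ y',
            ((∑ x, Q y x y' * P₂ x y') * Real.log (∑ x, Q y x y' * P₂ x y')
              - (∑ x, Q y x y' * P₂ x y')
                * Real.log (∑ y₂, ∑ x₂, Q y₂ x₂ y' * P₂ x₂ y'))) := by
      rw [Finset.mul_sum, Finset.mul_sum, ← Finset.sum_add_distrib]
      refine Finset.sum_le_sum fun y _ => ?_
      rw [Finset.mul_sum, Finset.mul_sum, ← Finset.sum_add_distrib]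
      refine Finset.sum_le_sum fun y' _ => ?_
      rw [hSc y y', hTc y']
      exact g_convex_aux a b _ _ _ _ ha hb hab (hST P₁ h₁.1 y y').1 (hST P₁ h₁.1 y y').2
        (hST P₂ h₂.1 y y').1 (hST P₂ h₂.1 y y').2
    rw [hL]
    linarith [hD]
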